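/- Under the stated assumptions on V, for every j ∈ ℤ the discrete PML equation holds: −ω² ṽ_j = Σ_{r=-p}^{p} a_r ṽ_{j+r} + h Σ_{r=1}^{p} Σ_{ℓ=1}^{r} a_r (σ_{j+ℓ−1} Ψ̂^{(r+1−ℓ)}_{j+ℓ} − σ_{j−ℓ} Φ̂^{(r+1−ℓ)}_{j−ℓ}). -/

import Mathlib

/-- The discrete complex stretching grid
`Z_{j,k} = (j+k)h + i(h/ω) Σ_{ℓ=0}^{k-1} σ_ℓ` (the sum being 0 for `k ≤ 0`). -/
noncomputable def Zmap (h ω : ℝ) (σ : ℤ → ℝ) (j k : ℤ) : ℂ :=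
  ((j + k : ℤ) : ℂ) * (h : ℂ) +
    Complex.I * ((h : ℂ) / (ω : ℂ)) * ∑ l ∈ Finset.range k.toNat, ((σ l : ℝ) : ℂ)

/-- Discrete holomorphicity with respect to the grid `Zmap h ω σ`: the discrete
Cauchy–Riemann equations hold on every face. -/
def DiscreteHolo (h ω : ℝ) (σ : ℤ → ℝ) (F : ℤ → ℤ → ℂ) : Prop :=
  ∀ j k : ℤ,
    (F (j + 1) (k + 1) - F j k) * (Zmap h ω σ j (k + 1) - Zmap h ω σ (j + 1) k) =
    (F j (k + 1) - F (j + 1) k) * (Zmap h ω σ (j + 1) (k + 1) - Zmap h ω σ j k)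

/-- The auxiliary variable `Φ̂^{(r)}_j = (V_{−r+1,j+1} − V_{−r,j}) / (iω(2h + iσ_j h/ω))`. -/
noncomputable def PhiAux (h ω : ℝ) (σ : ℤ → ℝ) (V : ℤ → ℤ → ℂ) (r j : ℤ) : ℂ :=
  (V (-r + 1) (j + 1) - V (-r) j) /
    (Complex.I * (ω : ℂ) * (2 * (h : ℂ) + Complex.I * (σ j : ℂ) * (h : ℂ) / (ω : ℂ)))

/-- The auxiliary variable `Ψ̂^{(r)}_j = (V_{r,j} − V_{r−1,j−1}) / (iω(2h + iσ_{j−1} h/ω))`. -/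
noncomputable def PsiAux (h ω : ℝ) (σ : ℤ → ℝ) (V : ℤ → ℤ → ℂ) (r j : ℤ) : ℂ :=
  (V r j - V (r - 1) (j - 1)) /
    (Complex.I * (ω : ℂ) * (2 * (h : ℂ) + Complex.I * (σ (j - 1) : ℂ) * (h : ℂ) / (ω : ℂ)))


lemma sumdiff (σ : ℤ → ℝ) (hσneg : ∀ j : ℤ, j < 0 → σ j = 0) (k : ℤ) :
    ∑ l ∈ Finset.range (k+1).toNat, ((σ l : ℝ) : ℂ) =
      (∑ l ∈ Finset.range k.toNat, ((σ l : ℝ) : ℂ)) + (σ k : ℂ) := by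
  rcases le_or_gt 0 k with hk | hk
  · have h1 : (k+1).toNat = k.toNat + 1 := by omega
    rw [h1, Finset.sum_range_succ]
    congr 2
    rw [Int.toNat_of_nonneg hk]
  · have h1 : (k+1).toNat = 0 := by omega
    have h2 : k.toNat = 0 := by omega
    simp [h1, h2, hσneg k hk]

lemma inner_ne (h ω s : ℝ) (hh : h ≠ 0) :
    (2*(h:ℂ) + Complex.I * (s:ℂ) * (h:ℂ) / (ω:ℂ)) ≠ 0 := by
  intro hc
  have h1 : ((2*h : ℝ):ℂ) + ((s*h/ω : ℝ):ℂ) * Complex.I = 0 := by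
    push_cast
    linear_combination hc
  have h2 := congrArg Complex.re h1
  simp [Complex.add_re, Complex.mul_re, Complex.I_re, Complex.I_im] at h2
  exact hh (by linarith)

lemma tele_nat (f : ℤ → ℂ) (n : ℕ) :
    ∑ l ∈ Finset.Icc (1:ℤ) (n:ℤ), (f l - f (l+1)) = f 1 - f ((n:ℤ)+1) := by
  induction n with
  | zero => simp
  | succ n ih =>
      push_cast
      have hins : Finset.Icc (1:ℤ) ((n:ℤ)+1) = insert ((n:ℤ)+1) (Finset.Icc (1:ℤ) (n:ℤ)) := by
        ext x; simp only [Finset.mem_Icc, Finset.mem_insert]; omega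
      rw [hins, Finset.sum_insert (by simp only [Finset.mem_Icc]; omega), ih]
      ring

lemma tele (f : ℤ → ℂ) (r : ℤ) (hr : 0 ≤ r) :
    ∑ l ∈ Finset.Icc (1:ℤ) r, (f l - f (l+1)) = f 1 - f (r+1) := by
  have := tele_nat f r.toNat
  rwa [Int.toNat_of_nonneg hr] at this

lemma sum_split (p : ℕ) (q : ℤ → ℂ) (hq0 : q 0 = 0) :
    ∑ r ∈ Finset.Icc (-(p:ℤ)) (p:ℤ), q r = ∑ r ∈ Finset.Icc (1:ℤ) (p:ℤ), (q r + q (-r)) := by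
  have hp0 : (0:ℤ) ≤ p := by positivity
  have hu : Finset.Icc (-(p:ℤ)) (p:ℤ) =
      Finset.Icc (-(p:ℤ)) (-1) ∪ Finset.Icc (0:ℤ) (p:ℤ) := by
    ext x; simp only [Finset.mem_Icc, Finset.mem_union]; omega
  have hd : Disjoint (Finset.Icc (-(p:ℤ)) (-1)) (Finset.Icc (0:ℤ) (p:ℤ)) := by
    rw [Finset.disjoint_left]; intro x hx hx'
    simp only [Finset.mem_Icc] at hx hx'; omega
  rw [hu, Finset.sum_union hd]
  have h2 : Finset.Icc (0:ℤ) (p:ℤ) = insert 0 (Finset.Icc (1:ℤ) (p:ℤ)) := by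
    ext x; simp only [Finset.mem_Icc, Finset.mem_insert]; omega
  rw [h2, Finset.sum_insert (by simp), hq0, zero_add]
  have h3 : Finset.Icc (-(p:ℤ)) (-1) =
      (Finset.Icc (1:ℤ) (p:ℤ)).map ⟨Neg.neg, neg_injective⟩ := by
    ext x
    simp only [Finset.mem_Icc, Finset.mem_map, Function.Embedding.coeFn_mk]
    constructor
    · intro hx; exact ⟨-x, by omega, by ring⟩
    · rintro ⟨a, ha, rfl⟩; omega
  rw [h3, Finset.sum_map, Finset.sum_add_distrib]
  simp only [Function.Embedding.coeFn_mk]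
  ring

lemma zdiff1 (h ω : ℝ) (σ : ℤ → ℝ) (hσneg : ∀ j : ℤ, j < 0 → σ j = 0) (j k : ℤ) :
    Zmap h ω σ j (k+1) - Zmap h ω σ (j+1) k = Complex.I * ((h:ℂ)/(ω:ℂ)) * (σ k : ℂ) := by
  unfold Zmap
  have hs := sumdiff σ hσneg k
  rw [hs]
  push_cast
  ring

lemma zdiff2 (h ω : ℝ) (σ : ℤ → ℝ) (hσneg : ∀ j : ℤ, j < 0 → σ j = 0) (j k : ℤ) :
    Zmap h ω σ (j+1) (k+1) - Zmap h ω σ j k = 2*(h:ℂ) + Complex.I * ((h:ℂ)/(ω:ℂ)) * (σ k : ℂ) := by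
  unfold Zmap
  have hs := sumdiff σ hσneg k
  rw [hs]
  push_cast
  ring

lemma cr (h ω : ℝ) (σ : ℤ → ℝ) (hσneg : ∀ j : ℤ, j < 0 → σ j = 0)
    (V : ℤ → ℤ → ℂ) (hholo : DiscreteHolo h ω σ V) (j k : ℤ) :
    (V (j+1) (k+1) - V j k) * (Complex.I * ((h:ℂ)/(ω:ℂ)) * (σ k : ℂ)) =
      (V j (k+1) - V (j+1) k) * (2*(h:ℂ) + Complex.I * ((h:ℂ)/(ω:ℂ)) * (σ k : ℂ)) := by
  have := hholo j k
  rwa [zdiff1 h ω σ hσneg j k, zdiff2 h ω σ hσneg j k] at this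

lemma den_ne (h ω s : ℝ) (hh : h ≠ 0) (hω : ω ≠ 0) :
    (Complex.I * (ω:ℂ) * (2*(h:ℂ) + Complex.I * (s:ℂ) * (h:ℂ) / (ω:ℂ))) ≠ 0 :=
  mul_ne_zero (mul_ne_zero Complex.I_ne_zero (by exact_mod_cast hω)) (inner_ne h ω s hh)

lemma psi_key (h ω : ℝ) (hh : h ≠ 0) (hω : ω ≠ 0) (σ : ℤ → ℝ)
    (hσneg : ∀ j : ℤ, j < 0 → σ j = 0)
    (V : ℤ → ℤ → ℂ) (hholo : DiscreteHolo h ω σ V) (s m : ℤ) :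
    (h:ℂ) * (σ (m-1) : ℂ) * PsiAux h ω σ V s m = V s (m-1) - V (s-1) m := by
  have hcr := cr h ω σ hσneg V hholo (s-1) (m-1)
  rw [show s-1+1 = s by ring, show m-1+1 = m by ring] at hcr
  have hωc : (ω:ℂ) ≠ 0 := by exact_mod_cast hω
  unfold PsiAux
  rw [← mul_div_assoc, div_eq_iff (den_ne h ω (σ (m-1)) hh hω)]
  linear_combination (-Complex.I * (ω:ℂ)) * hcr +
    ((h:ℂ)*(σ (m-1):ℂ)*((ω:ℂ)*(ω:ℂ)⁻¹)*(V s m - V (s-1) (m-1))) * Complex.I_sq +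
    (-((h:ℂ)*(σ (m-1):ℂ)*(V s m - V (s-1) (m-1)))) * (mul_inv_cancel₀ hωc)

lemma phi_key (h ω : ℝ) (hh : h ≠ 0) (hω : ω ≠ 0) (σ : ℤ → ℝ)
    (hσneg : ∀ j : ℤ, j < 0 → σ j = 0)
    (V : ℤ → ℤ → ℂ) (hholo : DiscreteHolo h ω σ V) (s m : ℤ) :
    -((h:ℂ) * (σ m : ℂ)) * PhiAux h ω σ V s m = V (-s) (m+1) - V (-s+1) m := by
  have hcr := cr h ω σ hσneg V hholo (-s) m
  have hωc : (ω:ℂ) ≠ 0 := by exact_mod_cast hω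
  unfold PhiAux
  rw [← mul_div_assoc, div_eq_iff (den_ne h ω (σ m) hh hω)]
  linear_combination (Complex.I * (ω:ℂ)) * hcr +
    (-((h:ℂ)*(σ m:ℂ)*((ω:ℂ)*(ω:ℂ)⁻¹)*(V (-s+1) (m+1) - V (-s) m))) * Complex.I_sq +
    ((h:ℂ)*(σ m:ℂ)*(V (-s+1) (m+1) - V (-s) m)) * (mul_inv_cancel₀ hωc)

/-- the discrete PML equation
`−ω² ṽ_j = Σ_r a_r ṽ_{j+r} + h Σ_{r=1}^{p} Σ_{ℓ=1}^{r} a_r (σ_{j+ℓ−1} Ψ̂^{(r+1−ℓ)}_{j+ℓ} − σ_{j−ℓ} Φ̂^{(r+1−ℓ)}_{j−ℓ})`,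
where `ṽ_j = V_{0,j}`. -/
theorem stmt13
    (p : ℕ) (hp : 1 ≤ p) (h : ℝ) (hh : 0 < h)
    (a : ℤ → ℝ) (hsym : ∀ r : ℤ, a (-r) = a r)
    (ω : ℝ) (hω : ω ≠ 0)
    (σ : ℤ → ℝ) (hσ : ∀ j : ℤ, 0 ≤ σ j) (hσneg : ∀ j : ℤ, j < 0 → σ j = 0)
    (V : ℤ → ℤ → ℂ) (hholo : DiscreteHolo h ω σ V)
    (heq : ∀ j k : ℤ, (∑ r ∈ Finset.Icc (-(p : ℤ)) (p : ℤ), (a r : ℂ) * V (j + r) k) +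
        (ω : ℂ) ^ 2 * V j k = 0)
    (j : ℤ) :
    -(ω : ℂ) ^ 2 * V 0 j =
      (∑ r ∈ Finset.Icc (-(p : ℤ)) (p : ℤ), (a r : ℂ) * V 0 (j + r)) +
      (h : ℂ) * ∑ r ∈ Finset.Icc (1 : ℤ) (p : ℤ), ∑ l ∈ Finset.Icc (1 : ℤ) r,
        (a r : ℂ) * ((σ (j + l - 1) : ℂ) * PsiAux h ω σ V (r + 1 - l) (j + l) -
          (σ (j - l) : ℂ) * PhiAux h ω σ V (r + 1 - l) (j - l)) := by
  have hh0 : h ≠ 0 := ne_of_gt hh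
  have hA : -(ω:ℂ)^2 * V 0 j = ∑ r ∈ Finset.Icc (-(p:ℤ)) (p:ℤ), (a r : ℂ) * V r j := by
    have h0 := heq 0 j
    simp only [zero_add] at h0
    linear_combination -h0
  have hB : (h : ℂ) * ∑ r ∈ Finset.Icc (1 : ℤ) (p : ℤ), ∑ l ∈ Finset.Icc (1 : ℤ) r,
        (a r : ℂ) * ((σ (j + l - 1) : ℂ) * PsiAux h ω σ V (r + 1 - l) (j + l) -
          (σ (j - l) : ℂ) * PhiAux h ω σ V (r + 1 - l) (j - l)) =
      ∑ r ∈ Finset.Icc (1:ℤ) (p:ℤ),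
        (a r : ℂ) * ((V r j - V 0 (j+r)) + (V (-r) j - V 0 (j-r))) := by
    rw [Finset.mul_sum]
    refine Finset.sum_congr rfl fun r hr => ?_
    obtain ⟨hr1, hrp⟩ := Finset.mem_Icc.mp hr
    have t1 : ∑ l ∈ Finset.Icc (1:ℤ) r, (V (r+1-l) (j+l-1) - V (r-l) (j+l)) =
        V r j - V 0 (j+r) := by
      have t := tele (fun l => V (r+1-l) (j+l-1)) r (by omega)
      simp only [show ∀ l : ℤ, r+1-(l+1) = r-l from fun l => by ring,
        show ∀ l : ℤ, j+(l+1)-1 = j+l from fun l => by ring,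
        show r+1-1 = r from by ring, show j+1-1 = j from by ring,
        show r-r = (0:ℤ) from by ring] at t
      exact t
    have t2 : ∑ l ∈ Finset.Icc (1:ℤ) r, (V (l-r-1) (j-l+1) - V (l-r) (j-l)) =
        V (-r) j - V 0 (j-r) := by
      have t := tele (fun l => V (l-r-1) (j-l+1)) r (by omega)
      simp only [show ∀ l : ℤ, l+1-r-1 = l-r from fun l => by ring,
        show ∀ l : ℤ, j-(l+1)+1 = j-l from fun l => by ring,
        show (1:ℤ)-r-1 = -r from by ring, show j-1+1 = j from by ring,
        show r-r = (0:ℤ) from by ring] at t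
      exact t
    have step : ∀ l ∈ Finset.Icc (1:ℤ) r,
        (h:ℂ) * ((a r : ℂ) * ((σ (j + l - 1) : ℂ) * PsiAux h ω σ V (r + 1 - l) (j + l) -
          (σ (j - l) : ℂ) * PhiAux h ω σ V (r + 1 - l) (j - l))) =
        (a r : ℂ) * ((V (r+1-l) (j+l-1) - V (r-l) (j+l)) +
          (V (l-r-1) (j-l+1) - V (l-r) (j-l))) := by
      intro l hl
      have k1 := psi_key h ω hh0 hω σ hσneg V hholo (r+1-l) (j+l)
      have k2 := phi_key h ω hh0 hω σ hσneg V hholo (r+1-l) (j-l)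
      rw [show r+1-l-1 = r-l from by ring] at k1
      rw [show -(r+1-l)+1 = l-r from by ring, show -(r+1-l) = l-r-1 from by ring] at k2
      linear_combination (a r : ℂ) * k1 + (a r : ℂ) * k2
    rw [Finset.mul_sum, Finset.sum_congr rfl step, ← Finset.mul_sum,
      Finset.sum_add_distrib, t1, t2]
  have hS := sum_split p (fun r => (a r:ℂ) * (V r j - V 0 (j+r))) (by simp)
  have hS2 : ∑ r ∈ Finset.Icc (1:ℤ) (p:ℤ),
        ((a r:ℂ) * (V r j - V 0 (j+r)) + (a (-r):ℂ) * (V (-r) j - V 0 (j+ -r))) =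
      ∑ r ∈ Finset.Icc (1:ℤ) (p:ℤ),
        (a r : ℂ) * ((V r j - V 0 (j+r)) + (V (-r) j - V 0 (j-r))) := by
    refine Finset.sum_congr rfl fun r _ => ?_
    rw [hsym r, show j + -r = j - r from by ring]
    ring
  have hQ : ∑ r ∈ Finset.Icc (-(p:ℤ)) (p:ℤ), (a r:ℂ) * (V r j - V 0 (j+r)) =
      (∑ r ∈ Finset.Icc (-(p:ℤ)) (p:ℤ), (a r:ℂ) * V r j) -
      ∑ r ∈ Finset.Icc (-(p:ℤ)) (p:ℤ), (a r:ℂ) * V 0 (j+r) := by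
    rw [← Finset.sum_sub_distrib]
    exact Finset.sum_congr rfl fun r _ => by ring
  rw [hA, hB]
  rw [hS, hS2] at hQ
  linear_combination -hQ
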